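/- Let q ≥ 1 be a natural number and let x : [0, ∞) → (Fin q → ℝ) be a differentiable function satisfying, for every i ∈ Fin q, the cyclic linear ODE x_i′(t) = x_{i−1}(t) − x_i(t) (where the index i−1 is taken modulo q), and suppose ∑_{i} x_i(0) = 1. Then for every i ∈ Fin q, x_i(t) converges to 1/q as t → ∞. -/

import Mathlib

open Filter
open Fin.NatCast Fin.CommRing

-- telescoping around the cycle
lemma cyc_tele (q : ℕ) [NeZero q] (y : Fin q → ℝ) (b : Fin q) (m : ℕ) :
    y (b + (m : Fin q)) - y b
      = ∑ n ∈ Finset.range m, (y (b + (n : Fin q) + 1) - y (b + (n : Fin q) + 1 - 1)) := by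
  induction m with
  | zero => simp
  | succ m ih =>
      rw [Finset.sum_range_succ, ← ih, add_sub_cancel_right]
      push_cast
      rw [← add_assoc]
      ring

lemma cyc_diff_bound (q : ℕ) [NeZero q] (y : Fin q → ℝ) (a b : Fin q) :
    |y a - y b| ≤ (q : ℝ) * ∑ k : Fin q, |y k - y (k - 1)| := by
  have ha : a = b + ((a - b).val : Fin q) := by
    rw [Fin.cast_val_eq_self]; ring
  rw [ha, cyc_tele]
  refine (Finset.abs_sum_le_sum_abs (fun n : ℕ => y (b + (n : Fin q) + 1) - y (b + (n : Fin q) + 1 - 1)) (Finset.range (a - b).val)).trans ?_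
  have h1 : ∀ n ∈ Finset.range (a - b).val,
      |y (b + (n : Fin q) + 1) - y (b + (n : Fin q) + 1 - 1)|
        ≤ ∑ k : Fin q, |y k - y (k - 1)| := by
    intro n _
    exact Finset.single_le_sum (f := fun k : Fin q => |y k - y (k - 1)|) (fun k _ => abs_nonneg _) (Finset.mem_univ _)
  refine (Finset.sum_le_sum h1).trans ?_
  rw [Finset.sum_const, Finset.card_range, nsmul_eq_mul]
  have : ((a - b).val : ℝ) ≤ (q : ℝ) := by
    exact_mod_cast (a - b).isLt.le
  exact mul_le_mul_of_nonneg_right this (Finset.sum_nonneg fun k _ => abs_nonneg _)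

lemma cyc_abs_bound (q : ℕ) [NeZero q] (y : Fin q → ℝ) (h0 : ∑ i : Fin q, y i = 0)
    (i : Fin q) : |y i| ≤ (q : ℝ) * ∑ k : Fin q, |y k - y (k - 1)| := by
  rcases le_or_gt 0 (y i) with hi | hi
  · have : ∃ b : Fin q, y b ≤ 0 := by
      by_contra h
      push_neg at h
      have : 0 < ∑ j : Fin q, y j :=
        Finset.sum_pos (fun j _ => h j) (Finset.univ_nonempty)
      linarith
    obtain ⟨b, hb⟩ := this
    calc |y i| = y i := abs_of_nonneg hi
      _ ≤ y i - y b := by linarith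
      _ ≤ |y i - y b| := le_abs_self _
      _ ≤ _ := cyc_diff_bound q y i b
  · have : ∃ b : Fin q, 0 ≤ y b := by
      by_contra h
      push_neg at h
      have : ∑ j : Fin q, y j < 0 :=
        Finset.sum_neg (fun j _ => h j) (Finset.univ_nonempty)
      linarith
    obtain ⟨b, hb⟩ := this
    calc |y i| = -(y i) := abs_of_neg hi
      _ ≤ y b - y i := by linarith
      _ ≤ |y b - y i| := le_abs_self _
      _ ≤ _ := cyc_diff_bound q y b i

lemma cyc_poincare (q : ℕ) [NeZero q] (y : Fin q → ℝ) (h0 : ∑ i : Fin q, y i = 0) :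
    ∑ i : Fin q, (y i) ^ 2 ≤ (q : ℝ) ^ 4 * ∑ i : Fin q, (y i - y (i - 1)) ^ 2 := by
  set A := ∑ k : Fin q, |y k - y (k - 1)| with hA
  have hAnn : 0 ≤ A := Finset.sum_nonneg fun k _ => abs_nonneg _
  have h1 : ∀ i : Fin q, (y i) ^ 2 ≤ ((q : ℝ) * A) ^ 2 := by
    intro i
    rw [← sq_abs (y i)]
    exact pow_le_pow_left₀ (abs_nonneg _) (cyc_abs_bound q y h0 i) 2
  have h2 : ∑ i : Fin q, (y i) ^ 2 ≤ (q : ℝ) * ((q : ℝ) * A) ^ 2 := by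
    calc ∑ i : Fin q, (y i) ^ 2 ≤ ∑ _i : Fin q, ((q : ℝ) * A) ^ 2 :=
          Finset.sum_le_sum fun i _ => h1 i
      _ = (q : ℝ) * ((q : ℝ) * A) ^ 2 := by
          rw [Finset.sum_const, Finset.card_univ, Fintype.card_fin, nsmul_eq_mul]
  have h3 : A ^ 2 ≤ (q : ℝ) * ∑ i : Fin q, (y i - y (i - 1)) ^ 2 := by
    have := sq_sum_le_card_mul_sum_sq (s := (Finset.univ : Finset (Fin q)))
      (f := fun k => |y k - y (k - 1)|)
    simpa [sq_abs, Finset.card_univ] using this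
  have hq0 : (0:ℝ) ≤ (q:ℝ) := Nat.cast_nonneg q
  calc ∑ i : Fin q, (y i) ^ 2 ≤ (q : ℝ) * ((q : ℝ) * A) ^ 2 := h2
    _ = (q:ℝ)^3 * A^2 := by ring
    _ ≤ (q:ℝ)^3 * ((q : ℝ) * ∑ i : Fin q, (y i - y (i - 1)) ^ 2) := by
        exact mul_le_mul_of_nonneg_left h3 (by positivity)
    _ = (q : ℝ) ^ 4 * ∑ i : Fin q, (y i - y (i - 1)) ^ 2 := by ring

/-- The cyclic unimolecular protocol `X_i → X_{(i mod q)+1}`: every state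
converges to `1/q`. Index arithmetic is taken cyclically in `Fin q`. -/
theorem stmt_4 (q : ℕ) (hq : 1 ≤ q) (x : ℝ → (Fin q → ℝ))
    (hx : ∀ t : ℝ, 0 ≤ t → ∀ i : Fin q,
      HasDerivAt (fun t => x t i)
        (x t (i - ⟨1 % q, Nat.mod_lt 1 (by omega)⟩) - x t i) t)
    (hsum : ∑ i : Fin q, x 0 i = 1) :
    ∀ i : Fin q, Tendsto (fun t => x t i) atTop (nhds (1 / (q : ℝ))) := by
  haveI : NeZero q := ⟨by omega⟩
  have hone : (⟨1 % q, Nat.mod_lt 1 (by omega)⟩ : Fin q) = 1 := by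
    apply Fin.ext; simp [Fin.val_one']
  have hx' : ∀ t : ℝ, 0 ≤ t → ∀ i : Fin q,
      HasDerivAt (fun t => x t i) (x t (i - 1) - x t i) t := by
    intro t ht i; have := hx t ht i; rwa [hone] at this
  have hshift : ∀ (f : Fin q → ℝ), ∑ i : Fin q, f (i - 1) = ∑ i : Fin q, f i := by
    intro f
    exact Fintype.sum_equiv (Equiv.subRight (1 : Fin q)) _ _ (fun i => rfl)
  -- conservation of total mass
  have hSd : ∀ t : ℝ, 0 ≤ t → HasDerivAt (fun t => ∑ i : Fin q, x t i) 0 t := by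
    intro t ht
    have h := HasDerivAt.fun_sum (fun i (_ : i ∈ Finset.univ) => hx' t ht i)
    simpa [Finset.sum_sub_distrib, hshift (fun i => x t i)] using h
  have hS : ∀ t : ℝ, 0 ≤ t → ∑ i : Fin q, x t i = 1 := by
    intro t ht
    have h := constant_of_has_deriv_right_zero
      (f := fun t => ∑ i : Fin q, x t i) (a := 0) (b := t)
      (fun u hu => ((hSd u hu.1).continuousAt.continuousWithinAt))
      (fun u hu => (hSd u hu.1).hasDerivWithinAt)
    have h2 := h t (Set.mem_Icc.2 ⟨ht, le_refl t⟩)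
    rw [h2, hsum]
  set c : ℝ := (q : ℝ) ^ 4 with hcdef
  have hc : 0 < c := by positivity
  -- centered variables sum to zero
  have hy0 : ∀ t : ℝ, 0 ≤ t → ∑ i : Fin q, (x t i - 1 / (q:ℝ)) = 0 := by
    intro t ht
    rw [Finset.sum_sub_distrib, hS t ht, Finset.sum_const, Finset.card_univ,
      Fintype.card_fin, nsmul_eq_mul]
    have : (q:ℝ) ≠ 0 := by positivity
    field_simp
    norm_num
  set V : ℝ → ℝ := fun t => ∑ i : Fin q, (x t i - 1 / (q:ℝ)) ^ 2 with hVdef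
  have hVd : ∀ t : ℝ, 0 ≤ t → HasDerivAt V
      (∑ i : Fin q, 2 * (x t i - 1/(q:ℝ)) *
        ((x t (i-1) - 1/(q:ℝ)) - (x t i - 1/(q:ℝ)))) t := by
    intro t ht
    refine HasDerivAt.fun_sum (fun i _ => ?_)
    have h1 : HasDerivAt (fun t => x t i - 1/(q:ℝ)) (x t (i-1) - x t i) t :=
      (hx' t ht i).sub_const _
    have h2 := h1.fun_pow 2
    convert h2 using 1
    · rfl
    push_cast
    ring
  -- the derivative is at most -V/c
  have hkey : ∀ t : ℝ, 0 ≤ t →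
      (∑ i : Fin q, 2 * (x t i - 1/(q:ℝ)) *
        ((x t (i-1) - 1/(q:ℝ)) - (x t i - 1/(q:ℝ)))) ≤ -(V t / c) := by
    intro t ht
    set y : Fin q → ℝ := fun i => x t i - 1/(q:ℝ) with hydef
    have e1 : (∑ i : Fin q, 2 * y i * (y (i-1) - y i))
        = -(∑ i : Fin q, (y i - y (i-1))^2) := by
      have step : ∀ i : Fin q, 2 * y i * (y (i-1) - y i)
          = -((y i - y (i-1))^2) + ((y (i-1))^2 - (y i)^2) := by
        intro i; ring
      rw [Finset.sum_congr rfl (fun i _ => step i), Finset.sum_add_distrib,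
        Finset.sum_sub_distrib, hshift (fun i => (y i)^2)]
      simp [Finset.sum_neg_distrib]
    rw [e1]
    have hp := cyc_poincare q y (hy0 t ht)
    have hVt : V t = ∑ i : Fin q, (y i)^2 := rfl
    rw [neg_le_neg_iff, div_le_iff₀ hc, hcdef]
    linarith [hp, hVt]
  -- g = V * exp(t/c) is antitone on [0, ∞)
  set g : ℝ → ℝ := fun t => V t * Real.exp (t / c) with hgdef
  have hgd : ∀ t : ℝ, 0 ≤ t → HasDerivAt g
      ((∑ i : Fin q, 2 * (x t i - 1/(q:ℝ)) *
        ((x t (i-1) - 1/(q:ℝ)) - (x t i - 1/(q:ℝ)))) * Real.exp (t/c)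
        + V t * (Real.exp (t/c) * (1/c))) t := by
    intro t ht
    exact (hVd t ht).mul (((hasDerivAt_id t).div_const c).exp)
  have hganti : AntitoneOn g (Set.Ici (0:ℝ)) := by
    apply antitoneOn_of_deriv_nonpos (convex_Ici 0)
    · intro t ht; exact (hgd t ht).continuousAt.continuousWithinAt
    · intro t ht
      rw [interior_Ici] at ht
      exact (hgd t (le_of_lt ht)).differentiableAt.differentiableWithinAt
    · intro t ht
      rw [interior_Ici] at ht
      rw [(hgd t (le_of_lt ht)).deriv]
      have hk := hkey t (le_of_lt ht)
      have he : (0:ℝ) < Real.exp (t/c) := Real.exp_pos _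
      have h3 : (∑ i : Fin q, 2 * (x t i - 1/(q:ℝ)) *
          ((x t (i-1) - 1/(q:ℝ)) - (x t i - 1/(q:ℝ)))) + V t / c ≤ 0 := by linarith
      calc (∑ i : Fin q, 2 * (x t i - 1/(q:ℝ)) *
            ((x t (i-1) - 1/(q:ℝ)) - (x t i - 1/(q:ℝ)))) * Real.exp (t/c)
            + V t * (Real.exp (t/c) * (1/c))
          = ((∑ i : Fin q, 2 * (x t i - 1/(q:ℝ)) *
            ((x t (i-1) - 1/(q:ℝ)) - (x t i - 1/(q:ℝ)))) + V t / c) * Real.exp (t/c) := by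
            ring
        _ ≤ 0 := mul_nonpos_of_nonpos_of_nonneg h3 he.le
  have hVle : ∀ t : ℝ, 0 ≤ t → V t ≤ V 0 * Real.exp (-(t/c)) := by
    intro t ht
    have h1 : g t ≤ g 0 := hganti (Set.mem_Ici.2 (le_refl 0)) (Set.mem_Ici.2 ht) ht
    have h2 : V t * Real.exp (t/c) ≤ V 0 := by
      simpa [hgdef, Real.exp_zero] using h1
    rw [Real.exp_neg, ← div_eq_mul_inv, le_div_iff₀ (Real.exp_pos _)]
    exact h2
  -- conclusion
  intro i
  have hyb : ∀ t : ℝ, 0 ≤ t → (x t i - 1/(q:ℝ))^2 ≤ V 0 * Real.exp (-(t/c)) := by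
    intro t ht
    refine le_trans ?_ (hVle t ht)
    exact Finset.single_le_sum (f := fun j : Fin q => (x t j - 1/(q:ℝ))^2)
      (fun j _ => sq_nonneg _) (Finset.mem_univ i)
  have hlim0 : Tendsto (fun t : ℝ => V 0 * Real.exp (-(t/c))) atTop (nhds 0) := by
    have hin : Tendsto (fun t : ℝ => -(t/c)) atTop atBot := by
      have h1 : Tendsto (fun t : ℝ => t / c) atTop atTop :=
        tendsto_id.atTop_div_const hc
      exact tendsto_neg_atBot_iff.2 h1
    have := (Real.tendsto_exp_atBot.comp hin).const_mul (V 0)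
    simpa [Function.comp] using this
  have hsq : Tendsto (fun t : ℝ => (x t i - 1/(q:ℝ))^2) atTop (nhds 0) := by
    refine squeeze_zero' ?_ ?_ hlim0
    · exact (eventually_ge_atTop (0:ℝ)).mono (fun t _ => sq_nonneg _)
    · exact (eventually_ge_atTop (0:ℝ)).mono (fun t ht => hyb t ht)
  have habs : Tendsto (fun t : ℝ => |x t i - 1/(q:ℝ)|) atTop (nhds 0) := by
    have h := (Real.continuous_sqrt.tendsto 0).comp hsq
    simpa [Function.comp_def, Real.sqrt_sq_eq_abs] using h
  have hy : Tendsto (fun t : ℝ => x t i - 1/(q:ℝ)) atTop (nhds 0) :=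
    (tendsto_zero_iff_abs_tendsto_zero _).2 habs
  have hfin := hy.add_const (1/(q:ℝ))
  simpa using hfin
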